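/- Let m be a positive integer. Let R ∈ ℝ^{(m+1)×(m+1)} be upper triangular and invertible, with leading m×m principal submatrix R_m and ρ = R_{m+1,m+1}. Let Ĥ ∈ ℝ^{(m+1)×m} be a matrix whose last row equals h^{(h)}·e_mᵀ for a scalar h^{(h)} ∈ ℝ, and let H̄ = R·Ĥ·R_m⁻¹. Then H̄_{m+1,m} = 0 if and only if h^{(h)} = 0. (In particular, the Arnoldi process terminates with a happy breakdown exactly when the Hessenberg process does.) -/
import Mathlib


/-- with `R ∈ ℝ^{(m+1)×(m+1)}` upper triangular invertible, `Rm` its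
leading principal submatrix, `Ĥ ∈ ℝ^{(m+1)×m}` with last row `h⁽ʰ⁾·e_mᵀ`, and
`H̄ = R·Ĥ·Rm⁻¹`, one has `H̄_{m+1,m} = 0` if and only if `h⁽ʰ⁾ = 0`
(happy breakdowns of the Arnoldi and Hessenberg processes coincide). -/
theorem arnoldi_hessenberg_breakdown_equivalence
    (m : ℕ) (hm : 0 < m)
    (R : Matrix (Fin (m + 1)) (Fin (m + 1)) ℝ)
    (htri : ∀ i j : Fin (m + 1), (j : ℕ) < (i : ℕ) → R i j = 0)
    (hinv : IsUnit R)
    (Rm : Matrix (Fin m) (Fin m) ℝ)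
    (hRm : Rm = R.submatrix Fin.castSucc Fin.castSucc)
    (ρ : ℝ) (hρ : ρ = R (Fin.last m) (Fin.last m))
    (Hhat : Matrix (Fin (m + 1)) (Fin m) ℝ) (hh : ℝ)
    (hrow : ∀ j : Fin m,
      Hhat (Fin.last m) j = hh * (Pi.single (⟨m - 1, by omega⟩ : Fin m) (1 : ℝ) : Fin m → ℝ) j)
    (Hbar : Matrix (Fin (m + 1)) (Fin m) ℝ)
    (hHbar : Hbar = R * Hhat * Rm⁻¹) :
    Hbar (Fin.last m) ⟨m - 1, by omega⟩ = 0 ↔ hh = 0 := by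
  set l : Fin m := ⟨m - 1, by omega⟩ with hl
  -- R is block triangular
  have hbt : R.BlockTriangular id := by
    intro i j hij
    exact htri i j (by simpa using hij)
  have hdetR : R.det = ∏ i, R i i := Matrix.det_of_upperTriangular hbt
  have hdetR0 : R.det ≠ 0 := by
    have := hinv.map (Matrix.detMonoidHom (n := Fin (m+1)) (R := ℝ))
    simpa [isUnit_iff_ne_zero] using this
  have hdiag : ∀ i : Fin (m+1), R i i ≠ 0 := by
    intro i hi
    apply hdetR0
    rw [hdetR]
    exact Finset.prod_eq_zero (Finset.mem_univ i) hi
  have hρ0 : ρ ≠ 0 := hρ ▸ hdiag _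
  -- Rm triangular with nonzero diagonal, hence invertible
  have hRmtri : ∀ i j : Fin m, (j : ℕ) < (i : ℕ) → Rm i j = 0 := by
    intro i j hij
    rw [hRm]
    exact htri _ _ (by simpa using hij)
  have hRmbt : Rm.BlockTriangular id := fun i j hij => hRmtri i j (by simpa using hij)
  have hdetRm : Rm.det ≠ 0 := by
    rw [Matrix.det_of_upperTriangular hRmbt]
    apply Finset.prod_ne_zero_iff.2
    intro i _
    rw [hRm]
    exact hdiag _
  have hmul : Rm * Rm⁻¹ = 1 := Matrix.mul_nonsing_inv Rm (isUnit_iff_ne_zero.2 hdetRm)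
  -- Rm⁻¹ l l ≠ 0
  have hll : Rm l l * Rm⁻¹ l l = 1 := by
    have h1 : (Rm * Rm⁻¹) l l = 1 := by rw [hmul]; simp
    rw [Matrix.mul_apply] at h1
    rw [← h1]
    symm
    apply Finset.sum_eq_single
    · intro k _ hk
      have hkl : (k : ℕ) < (l : ℕ) := by
        have h1 := k.isLt
        have h2 : (k:ℕ) ≠ m - 1 := fun h => hk (Fin.ext (by simp [hl, h]))
        have h3 : (l:ℕ) = m - 1 := rfl
        omega
      rw [hRmtri l k hkl, zero_mul]
    · intro h; exact absurd (Finset.mem_univ l) h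
  have hX : Rm⁻¹ l l ≠ 0 := fun h => by simp [h] at hll
  -- compute the entry
  have hrowRH : ∀ j : Fin m, (R * Hhat) (Fin.last m) j = ρ * (hh * (Pi.single l (1:ℝ) : Fin m → ℝ) j) := by
    intro j
    rw [Matrix.mul_apply]
    rw [show (∑ k, R (Fin.last m) k * Hhat k j)
        = R (Fin.last m) (Fin.last m) * Hhat (Fin.last m) j from ?_]
    · rw [hrow j, hρ]
    · apply Finset.sum_eq_single
      · intro k _ hk
        have : (k : ℕ) < m := by
          have := k.isLt
          have : (k:ℕ) ≠ m := fun h => hk (Fin.ext (by simp [h]))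
          omega
        rw [htri _ _ (by simpa using this), zero_mul]
      · intro h; exact absurd (Finset.mem_univ _) h
  have key : Hbar (Fin.last m) l = ρ * hh * Rm⁻¹ l l := by
    rw [hHbar, Matrix.mul_apply]
    rw [show (∑ j, (R * Hhat) (Fin.last m) j * Rm⁻¹ j l)
        = (R * Hhat) (Fin.last m) l * Rm⁻¹ l l from ?_]
    · rw [hrowRH l]; simp [mul_assoc]
    · apply Finset.sum_eq_single
      · intro k _ hk
        rw [hrowRH k, Pi.single_apply, if_neg hk]
        ring
      · intro h; exact absurd (Finset.mem_univ _) h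
  rw [key]
  constructor
  · intro h
    rcases mul_eq_zero.1 h with h' | h'
    · rcases mul_eq_zero.1 h' with h'' | h''
      · exact absurd h'' hρ0
      · exact h''
    · exact absurd h' hX
  · intro h; rw [h]; ring
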